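/- For any n×n complex matrices A and B and any k with 1 ≤ k ≤ n, the sum over i from 1 to k of σ_i(A ∘ B) is at most the sum over i from 1 to k of σ_i(A)·σ_i(B), where ∘ denotes the Hadamard (entrywise) product. -/

import Mathlib

open Matrix Finset

/-- The `i`-th largest singular value of an `n × n` complex matrix
(indexed by `i : Fin n`, with `i = 0` the largest). -/
noncomputable def singularValue {n : ℕ} (A : Matrix (Fin n) (Fin n) ℂ) (i : Fin n) : ℝ :=
  Real.sqrt ((((Matrix.isHermitian_conjTranspose_mul_self A)).eigenvalues ∘
    Tuple.sort ((Matrix.isHermitian_conjTranspose_mul_self A)).eigenvalues) i.rev)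

/-- Euclidean norm of the `j`-th column of `Z`. -/
noncomputable def colNorm {n : ℕ} (Z : Matrix (Fin n) (Fin n) ℂ) (j : Fin n) : ℝ :=
  Real.sqrt (∑ k, ‖Z k j‖ ^ 2)

/-- The `i`-th largest column norm of `Z` (decreasingly ordered `c_i(Z)`). -/
noncomputable def colNormSorted {n : ℕ} (Z : Matrix (Fin n) (Fin n) ℂ) (i : Fin n) : ℝ :=
  (colNorm Z ∘ Tuple.sort (colNorm Z)) i.rev

namespace KF

variable {n : ℕ}

/-- complex dot product, conjugate-linear in the first argument. -/
noncomputable def dot (a b : Fin n → ℂ) : ℂ := ∑ m, (starRingEnd ℂ) (a m) * b m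

noncomputable def nsq (a : Fin n → ℂ) : ℝ := ∑ m, Complex.normSq (a m)

lemma nsq_nonneg (a : Fin n → ℂ) : 0 ≤ nsq a :=
  Finset.sum_nonneg fun _ _ => Complex.normSq_nonneg _

lemma dot_self (a : Fin n → ℂ) : dot a a = (nsq a : ℂ) := by
  simp only [dot, nsq, Complex.ofReal_sum]
  exact Finset.sum_congr rfl fun m _ => by
    rw [← Complex.normSq_eq_conj_mul_self]

lemma dot_self_re (a : Fin n → ℂ) : (dot a a).re = nsq a := by
  rw [dot_self]; simp

lemma dot_conj (a b : Fin n → ℂ) : dot a b = (starRingEnd ℂ) (dot b a) := by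
  simp only [dot, map_sum, _root_.map_mul, Complex.conj_conj]
  exact Finset.sum_congr rfl fun m _ => by ring

lemma dot_sum_right (a : Fin n → ℂ) (s : Finset (Fin n)) (c : Fin n → ℂ) (g : Fin n → Fin n → ℂ) :
    dot a (fun m => ∑ i ∈ s, c i * g i m) = ∑ i ∈ s, c i * dot a (g i) := by
  simp only [dot, Finset.mul_sum]
  rw [Finset.sum_comm]
  exact Finset.sum_congr rfl fun i _ => Finset.sum_congr rfl fun m _ => by ring

lemma dot_sum_left (a : Fin n → ℂ) (s : Finset (Fin n)) (c : Fin n → ℂ) (g : Fin n → Fin n → ℂ) :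
    dot (fun m => ∑ i ∈ s, c i * g i m) a = ∑ i ∈ s, (starRingEnd ℂ) (c i) * dot (g i) a := by
  simp only [dot, map_sum, _root_.map_mul, Finset.sum_mul, Finset.mul_sum]
  rw [Finset.sum_comm]
  exact Finset.sum_congr rfl fun i _ => Finset.sum_congr rfl fun m _ => by ring

lemma eq_zero_of_nsq_eq_zero {a : Fin n → ℂ} (h : nsq a = 0) : a = 0 := by
  funext m
  have := (Finset.sum_eq_zero_iff_of_nonneg (fun i _ => Complex.normSq_nonneg (a i))).mp h m
    (Finset.mem_univ m)
  simpa [Complex.normSq_eq_zero] using this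

/-- Bessel inequality for a pairwise-orthogonal family with norms at most 1. -/
lemma bessel (g : Fin n → Fin n → ℂ)
    (ho : ∀ i j, i ≠ j → dot (g i) (g j) = 0)
    (hn : ∀ i, nsq (g i) ≤ 1)
    (s : Finset (Fin n)) (a : Fin n → ℂ) :
    ∑ i ∈ s, Complex.normSq (dot (g i) a) ≤ nsq a := by
  set c : Fin n → ℂ := fun i => dot (g i) a with hc
  set h : Fin n → ℂ := fun m => ∑ i ∈ s, c i * g i m with hh
  have hah : dot a h = (∑ i ∈ s, Complex.normSq (c i) : ℝ) := by
    calc dot a h = ∑ i ∈ s, c i * dot a (g i) := dot_sum_right a s c g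
      _ = ∑ i ∈ s, c i * (starRingEnd ℂ) (c i) := by
          exact Finset.sum_congr rfl fun i _ => by rw [dot_conj a (g i)]
      _ = _ := by
          rw [Complex.ofReal_sum]
          exact Finset.sum_congr rfl fun i _ => by rw [Complex.mul_conj]
  have hha : dot h a = (∑ i ∈ s, Complex.normSq (c i) : ℝ) := by
    rw [dot_conj, hah]
    simp
  have hhh : dot h h = ∑ i ∈ s, (Complex.normSq (c i) : ℂ) * dot (g i) (g i) := by
    calc dot h h = ∑ i ∈ s, (starRingEnd ℂ) (c i) * dot (g i) h := dot_sum_left h s c g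
      _ = ∑ i ∈ s, (starRingEnd ℂ) (c i) * ∑ j ∈ s, c j * dot (g i) (g j) := by
          exact Finset.sum_congr rfl fun i _ => by rw [dot_sum_right (g i) s c g]
      _ = _ := by
          refine Finset.sum_congr rfl fun i hi => ?_
          rw [Finset.sum_eq_single i (fun j hj hne => by rw [ho i j (Ne.symm hne), mul_zero])
            (fun h' => absurd hi h')]
          rw [← mul_assoc, mul_comm ((starRingEnd ℂ) (c i)) (c i), Complex.mul_conj]
  have key : 0 ≤ nsq a - 2 * (∑ i ∈ s, Complex.normSq (c i))
      + ∑ i ∈ s, Complex.normSq (c i) * (dot (g i) (g i)).re := by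
    have h0 : 0 ≤ nsq (a - h) := nsq_nonneg _
    have hexp : dot (a - h) (a - h) = dot a a - dot a h - dot h a + dot h h := by
      simp only [dot, Pi.sub_apply, map_sub]
      rw [← Finset.sum_sub_distrib, ← Finset.sum_sub_distrib, ← Finset.sum_add_distrib]
      exact Finset.sum_congr rfl fun m _ => by ring
    have heq : nsq (a - h) = (dot (a - h) (a - h)).re := (dot_self_re _).symm
    rw [heq, hexp] at h0
    have hre : (dot a a - dot a h - dot h a + dot h h).re
        = nsq a - 2 * (∑ i ∈ s, Complex.normSq (c i))
          + ∑ i ∈ s, Complex.normSq (c i) * (dot (g i) (g i)).re := by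
      rw [Complex.add_re, Complex.sub_re, Complex.sub_re, dot_self_re, hah, hha, hhh]
      rw [Complex.re_sum]
      simp only [Complex.ofReal_re, Complex.re_ofReal_mul]
      ring
    rw [hre] at h0
    exact h0
  have hbound : ∑ i ∈ s, Complex.normSq (c i) * (dot (g i) (g i)).re
      ≤ ∑ i ∈ s, Complex.normSq (c i) := by
    refine Finset.sum_le_sum fun i _ => ?_
    calc Complex.normSq (c i) * (dot (g i) (g i)).re
        ≤ Complex.normSq (c i) * 1 :=
          mul_le_mul_of_nonneg_left (by rw [dot_self_re]; exact hn i) (Complex.normSq_nonneg _)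
      _ = _ := mul_one _
  linarith

/-- Coordinate Bessel: columns of a suborthonormal family have ℓ²-mass ≤ 1 in each coordinate. -/
lemma bessel_coord (g : Fin n → Fin n → ℂ)
    (ho : ∀ i j, i ≠ j → dot (g i) (g j) = 0)
    (hn : ∀ i, nsq (g i) ≤ 1)
    (s : Finset (Fin n)) (m : Fin n) :
    ∑ i ∈ s, Complex.normSq (g i m) ≤ 1 := by
  have hb := bessel g ho hn s (fun m' => if m' = m then 1 else 0)
  have hd : ∀ i, dot (g i) (fun m' => if m' = m then 1 else 0) = (starRingEnd ℂ) (g i m) := by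
    intro i
    simp [dot, mul_ite, Finset.sum_ite_eq']
  have hn1 : nsq (fun m' => if m' = m then (1:ℂ) else 0) = 1 := by
    simp [nsq, apply_ite Complex.normSq, Finset.sum_ite_eq']
  rw [hn1] at hb
  calc ∑ i ∈ s, Complex.normSq (g i m)
      = ∑ i ∈ s, Complex.normSq (dot (g i) (fun m' => if m' = m then 1 else 0)) := by
        exact Finset.sum_congr rfl fun i _ => by rw [hd i, Complex.normSq_conj]
    _ ≤ 1 := hb

lemma singularValue_nonneg (M : Matrix (Fin n) (Fin n) ℂ) (i : Fin n) :
    0 ≤ singularValue M i := Real.sqrt_nonneg _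

lemma singularValue_antitone (M : Matrix (Fin n) (Fin n) ℂ) {i j : Fin n} (h : i ≤ j) :
    singularValue M j ≤ singularValue M i := by
  unfold singularValue
  exact Real.sqrt_le_sqrt (Tuple.monotone_sort _ (Fin.rev_le_rev.mpr h))

lemma sum3_rot {ι κ ω β : Type*} [AddCommMonoid β] (s : Finset ι) (t : Finset κ) (r : Finset ω)
    (F : ι → κ → ω → β) :
    ∑ m ∈ s, ∑ d ∈ t, ∑ c ∈ r, F m d c = ∑ c ∈ r, ∑ d ∈ t, ∑ m ∈ s, F m d c :=
  calc ∑ m ∈ s, ∑ d ∈ t, ∑ c ∈ r, F m d c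
      = ∑ d ∈ t, ∑ m ∈ s, ∑ c ∈ r, F m d c := Finset.sum_comm
    _ = ∑ d ∈ t, ∑ c ∈ r, ∑ m ∈ s, F m d c := Finset.sum_congr rfl fun _ _ => Finset.sum_comm
    _ = ∑ c ∈ r, ∑ d ∈ t, ∑ m ∈ s, F m d c := Finset.sum_comm

lemma sum4_swap {ι κ ω χ β : Type*} [AddCommMonoid β] (s : Finset ι) (t : Finset κ)
    (r : Finset ω) (z : Finset χ) (F : ι → κ → ω → χ → β) :
    ∑ a ∈ s, ∑ b ∈ t, ∑ i ∈ r, ∑ j ∈ z, F a b i j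
      = ∑ i ∈ r, ∑ j ∈ z, ∑ a ∈ s, ∑ b ∈ t, F a b i j :=
  calc ∑ a ∈ s, ∑ b ∈ t, ∑ i ∈ r, ∑ j ∈ z, F a b i j
      = ∑ a ∈ s, ∑ i ∈ r, ∑ b ∈ t, ∑ j ∈ z, F a b i j :=
        Finset.sum_congr rfl fun _ _ => Finset.sum_comm
    _ = ∑ i ∈ r, ∑ a ∈ s, ∑ b ∈ t, ∑ j ∈ z, F a b i j := Finset.sum_comm
    _ = ∑ i ∈ r, ∑ j ∈ z, ∑ b ∈ t, ∑ a ∈ s, F a b i j :=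
        Finset.sum_congr rfl fun _ _ => sum3_rot _ _ _ _
    _ = ∑ i ∈ r, ∑ j ∈ z, ∑ a ∈ s, ∑ b ∈ t, F a b i j :=
        Finset.sum_congr rfl fun _ _ => Finset.sum_congr rfl fun _ _ => Finset.sum_comm

lemma dot_mulVec (M : Matrix (Fin n) (Fin n) ℂ) (a b : Fin n → ℂ) :
    dot (M.mulVec a) (M.mulVec b) = dot a ((Mᴴ * M).mulVec b) := by
  simp only [dot, mulVec, dotProduct, mul_apply, conjTranspose_apply, map_sum, _root_.map_mul,
    Finset.sum_mul, Finset.mul_sum, Complex.star_def]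
  rw [sum3_rot]
  exact Finset.sum_congr rfl fun c _ => Finset.sum_congr rfl fun d _ =>
    Finset.sum_congr rfl fun m _ => by ring

lemma exists_svd (M : Matrix (Fin n) (Fin n) ℂ) :
    ∃ u v : Fin n → Fin n → ℂ,
      (∀ i j, i ≠ j → dot (u i) (u j) = 0) ∧
      (∀ i, dot (u i) (u i) = if singularValue M i = 0 then 0 else 1) ∧
      (∀ i j, dot (v i) (v j) = if i = j then 1 else 0) ∧
      (∀ a b : Fin n, M a b = ∑ i, (singularValue M i : ℂ) * (u i a * (starRingEnd ℂ) (v i b))) ∧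
      (∀ i a, M.mulVec (v i) a = (singularValue M i : ℂ) * u i a) := by
  classical
  set hH := Matrix.isHermitian_conjTranspose_mul_self M with hHdef
  set eτ : Equiv.Perm (Fin n) := (Fin.revPerm).trans (Tuple.sort hH.eigenvalues) with heτ
  set τ : Fin n → Fin n := ⇑eτ with hτ
  have hτdef : ∀ i, τ i = Tuple.sort hH.eigenvalues i.rev := fun i => rfl
  have hσdef : ∀ i, singularValue M i = Real.sqrt (hH.eigenvalues (τ i)) := fun i => rfl
  have hlamnn : ∀ i, 0 ≤ hH.eigenvalues (τ i) := fun i =>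
    Matrix.eigenvalues_conjTranspose_mul_self_nonneg M (τ i)
  have hσsq : ∀ i, (singularValue M i)^2 = hH.eigenvalues (τ i) := fun i => by
    rw [hσdef]; exact Real.sq_sqrt (hlamnn i)
  set v : Fin n → Fin n → ℂ := fun i => ⇑(hH.eigenvectorBasis (τ i)) with hv
  have hvon : ∀ i j, dot (v i) (v j) = if i = j then 1 else 0 := by
    intro i j
    have h1 : dot (v i) (v j)
        = (inner ℂ (hH.eigenvectorBasis (τ i)) (hH.eigenvectorBasis (τ j)) : ℂ) := by
      rw [PiLp.inner_apply]
      simp [dot, RCLike.inner_apply, hv]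
      exact Finset.sum_congr rfl fun m _ => mul_comm _ _
    rw [h1, orthonormal_iff_ite.mp hH.eigenvectorBasis.orthonormal]
    by_cases hij : i = j
    · simp [hij]
    · rw [if_neg (fun hc => hij (eτ.injective hc)), if_neg hij]
  have hHv : ∀ i, (Mᴴ * M) *ᵥ (v i) = hH.eigenvalues (τ i) • (v i) := fun i =>
    hH.mulVec_eigenvectorBasis (τ i)
  have hMvMv : ∀ i j, dot (M.mulVec (v i)) (M.mulVec (v j))
      = if i = j then ((hH.eigenvalues (τ j) : ℝ) : ℂ) else 0 := by
    intro i j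
    rw [dot_mulVec, hHv j]
    have hsm : dot (v i) (hH.eigenvalues (τ j) • v j)
        = (hH.eigenvalues (τ j) : ℂ) * dot (v i) (v j) := by
      simp only [dot, Pi.smul_apply, Complex.real_smul, Finset.mul_sum]
      exact Finset.sum_congr rfl fun m _ => by ring
    rw [hsm, hvon i j]
    by_cases hij : i = j <;> simp [hij]
  have hMvz : ∀ i, singularValue M i = 0 → M.mulVec (v i) = 0 := by
    intro i h0
    apply eq_zero_of_nsq_eq_zero
    have h1 := dot_self_re (M.mulVec (v i))
    rw [hMvMv i i, if_pos rfl] at h1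
    have h2 : hH.eigenvalues (τ i) = 0 := by rw [← hσsq i, h0]; ring
    rw [← h1, h2]
    simp
  set u : Fin n → Fin n → ℂ := fun i =>
    if singularValue M i = 0 then 0
    else fun a => ((singularValue M i : ℂ))⁻¹ * M.mulVec (v i) a with hu
  have hMvu : ∀ i a, M.mulVec (v i) a = (singularValue M i : ℂ) * u i a := by
    intro i a
    by_cases h0 : singularValue M i = 0
    · have := congrFun (hMvz i h0) a
      simp only [hu, if_pos h0, Pi.zero_apply] at *
      simp [this, h0]
    · have hc : ((singularValue M i : ℂ)) ≠ 0 := by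
        simpa using h0
      simp only [hu, if_neg h0]
      field_simp
  have hdotuu : ∀ i j, i ≠ j → dot (u i) (u j) = 0 := by
    intro i j hij
    by_cases h0 : singularValue M i = 0
    · simp [dot, hu, h0]
    by_cases h0' : singularValue M j = 0
    · simp [dot, hu, h0']
    simp only [hu, if_neg h0, if_neg h0']
    have hstep : dot (fun a => ((singularValue M i : ℂ))⁻¹ * M.mulVec (v i) a)
        (fun a => ((singularValue M j : ℂ))⁻¹ * M.mulVec (v j) a)
        = (starRingEnd ℂ) ((singularValue M i : ℂ))⁻¹ * ((singularValue M j : ℂ))⁻¹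
          * dot (M.mulVec (v i)) (M.mulVec (v j)) := by
      simp only [dot, _root_.map_mul, Finset.mul_sum, map_inv₀]
      exact Finset.sum_congr rfl fun m _ => by ring
    rw [hstep, hMvMv i j, if_neg hij, mul_zero]
  have hdotuu' : ∀ i, dot (u i) (u i) = if singularValue M i = 0 then 0 else 1 := by
    intro i
    by_cases h0 : singularValue M i = 0
    · simp [dot, hu, h0]
    have hc : ((singularValue M i : ℂ)) ≠ 0 := by simpa using h0
    simp only [hu, if_neg h0]
    have hstep : dot (fun a => ((singularValue M i : ℂ))⁻¹ * M.mulVec (v i) a)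
        (fun a => ((singularValue M i : ℂ))⁻¹ * M.mulVec (v i) a)
        = (starRingEnd ℂ) ((singularValue M i : ℂ))⁻¹ * ((singularValue M i : ℂ))⁻¹
          * dot (M.mulVec (v i)) (M.mulVec (v i)) := by
      simp only [dot, _root_.map_mul, Finset.mul_sum, map_inv₀]
      exact Finset.sum_congr rfl fun m _ => by ring
    rw [hstep, hMvMv i i, if_pos rfl]
    have hcc : (starRingEnd ℂ) ((singularValue M i : ℂ))⁻¹ = ((singularValue M i : ℂ))⁻¹ := by
      rw [map_inv₀, Complex.conj_ofReal]
    rw [hcc]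
    have hval : ((hH.eigenvalues (τ i) : ℝ) : ℂ)
        = (singularValue M i : ℂ) * (singularValue M i : ℂ) := by
      rw [← Complex.ofReal_mul, ← sq, hσsq i]
    rw [hval]
    field_simp
  have hcomp : ∀ c b : Fin n, (∑ i, v i c * (starRingEnd ℂ) (v i b))
      = if c = b then 1 else 0 := by
    intro c b
    have hbs := hH.eigenvectorBasis.sum_inner_mul_inner
      (EuclideanSpace.single c (1:ℂ)) (EuclideanSpace.single b (1:ℂ))
    simp only [EuclideanSpace.inner_single_left, EuclideanSpace.inner_single_right,
      EuclideanSpace.single_apply, RingHom.map_one, one_mul, apply_ite (starRingEnd ℂ),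
      RingHom.map_zero] at hbs
    have hre : ∑ i, v i c * (starRingEnd ℂ) (v i b)
        = ∑ x, hH.eigenvectorBasis x c * (starRingEnd ℂ) (hH.eigenvectorBasis x b) :=
      Fintype.sum_equiv eτ _ _ (fun i => rfl)
    rw [hre, hbs]
    simp [eq_comm]
  have hdec : ∀ a b : Fin n, M a b
      = ∑ i, (singularValue M i : ℂ) * (u i a * (starRingEnd ℂ) (v i b)) := by
    intro a b
    calc M a b = ∑ c, M a c * (∑ i, v i c * (starRingEnd ℂ) (v i b)) := by
          simp [hcomp, mul_ite, Finset.sum_ite_eq']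
      _ = ∑ i, (∑ c, M a c * v i c) * (starRingEnd ℂ) (v i b) := by
          simp only [Finset.mul_sum, Finset.sum_mul]
          rw [Finset.sum_comm]
          exact Finset.sum_congr rfl fun i _ => Finset.sum_congr rfl fun c _ => by ring
      _ = ∑ i, (singularValue M i : ℂ) * (u i a * (starRingEnd ℂ) (v i b)) := by
          refine Finset.sum_congr rfl fun i _ => ?_
          have hmv : (∑ c, M a c * v i c) = M.mulVec (v i) a := rfl
          rw [hmv, hMvu i a]
          ring
  exact ⟨u, v, hdotuu, hdotuu', hvon, hdec, hMvu⟩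

lemma abel_exists (σ : Fin n → ℝ) (hant : ∀ i j : Fin n, i ≤ j → σ j ≤ σ i)
    (hnn : ∀ i, 0 ≤ σ i) :
    ∃ α : Fin n → ℝ, (∀ p, 0 ≤ α p) ∧
      ∀ t : Fin n, ∑ p ∈ Finset.univ.filter (fun p => t ≤ p), α p = σ t := by
  classical
  set s : ℕ → ℝ := fun j => if h : j < n then σ ⟨j, h⟩ else 0 with hs
  have hsmono : ∀ j, s (j + 1) ≤ s j := by
    intro j
    by_cases h1 : j + 1 < n
    · have h0 : j < n := Nat.lt_of_succ_lt h1
      simp only [hs, dif_pos h1, dif_pos h0]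
      exact hant ⟨j, h0⟩ ⟨j + 1, h1⟩ (by simp [Fin.le_def])
    · by_cases h0 : j < n
      · simp only [hs, dif_neg h1, dif_pos h0]
        exact hnn _
      · simp [hs, dif_neg h1, dif_neg h0]
  have key : ∀ d m, m + d = n →
      ∑ p ∈ Finset.univ.filter (fun p : Fin n => m ≤ (p : ℕ)), (s p - s ((p : ℕ) + 1))
        = s m - s n := by
    intro d
    induction d with
    | zero =>
      intro m hm
      have hempty : Finset.univ.filter (fun p : Fin n => m ≤ (p : ℕ)) = ∅ := by
        apply Finset.filter_false_of_mem
        intro p _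
        have := p.isLt
        omega
      rw [hempty]
      subst hm
      simp
    | succ d ih =>
      intro m hm
      have hmn : m < n := by omega
      have hins : Finset.univ.filter (fun p : Fin n => m ≤ (p : ℕ))
          = insert ⟨m, hmn⟩ (Finset.univ.filter (fun p : Fin n => m + 1 ≤ (p : ℕ))) := by
        ext p
        simp only [Finset.mem_filter, Finset.mem_univ, true_and, Finset.mem_insert, Fin.ext_iff]
        omega
      have hnotmem : (⟨m, hmn⟩ : Fin n) ∉
          Finset.univ.filter (fun p : Fin n => m + 1 ≤ (p : ℕ)) := by
        simp
      rw [hins, Finset.sum_insert hnotmem, ih (m + 1) (by omega)]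
      ring
  refine ⟨fun p => s p - s ((p : ℕ) + 1), fun p => sub_nonneg.mpr (hsmono _), fun t => ?_⟩
  have h1 : ∑ p ∈ Finset.univ.filter (fun p : Fin n => t ≤ p), (s p - s ((p : ℕ) + 1))
      = ∑ p ∈ Finset.univ.filter (fun p : Fin n => (t : ℕ) ≤ (p : ℕ)), (s p - s ((p : ℕ) + 1)) := by
    apply Finset.sum_congr _ (fun _ _ => rfl)
    apply Finset.filter_congr
    intro p _
    exact Iff.rfl
  rw [h1, key (n - t) t (by have := t.isLt; omega)]
  have hsn : s n = 0 := by simp [hs]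
  have hst : s t = σ t := by simp [hs, t.isLt]
  rw [hsn, hst, sub_zero]

lemma card_filter_lt (m : ℕ) (hm : m ≤ n) :
    (Finset.univ.filter (fun t : Fin n => (t : ℕ) < m)).card = m := by
  have heq : Finset.univ.filter (fun t : Fin n => (t : ℕ) < m)
      = (Finset.univ : Finset (Fin m)).map (Fin.castLEEmb hm) := by
    ext t
    simp only [Finset.mem_filter, Finset.mem_univ, true_and, Finset.mem_map,
      Fin.castLEEmb_apply]
    constructor
    · intro ht
      exact ⟨⟨(t : ℕ), ht⟩, by apply Fin.ext; simp⟩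
    · rintro ⟨s', rfl⟩
      simpa using s'.isLt
  rw [heq, Finset.card_map, Finset.card_univ, Fintype.card_fin]

lemma nsq_mul (a b : Fin n → ℂ) :
    nsq (fun m => a m * b m) = ∑ m, Complex.normSq (a m) * Complex.normSq (b m) := by
  simp [nsq, Complex.normSq_mul]

lemma normSq_dot_comm (a b : Fin n → ℂ) :
    Complex.normSq (dot a b) = Complex.normSq (dot b a) := by
  rw [dot_conj, Complex.normSq_conj]

/-- `∑_{i∈I} ∑_{j∈J} ‖c1 i ∘ c2 j‖² ≤ |I|`. -/
lemma prod_nsq_le (c1 c2 : Fin n → Fin n → ℂ)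
    (h1n : ∀ i, nsq (c1 i) ≤ 1)
    (h2o : ∀ i j, i ≠ j → dot (c2 i) (c2 j) = 0)
    (h2n : ∀ i, nsq (c2 i) ≤ 1)
    (I J : Finset (Fin n)) :
    ∑ i ∈ I, ∑ j ∈ J, nsq (fun m => c1 i m * c2 j m) ≤ (I.card : ℝ) := by
  have step : ∀ i, ∑ j ∈ J, nsq (fun m => c1 i m * c2 j m) ≤ 1 := by
    intro i
    calc ∑ j ∈ J, nsq (fun m => c1 i m * c2 j m)
        = ∑ j ∈ J, ∑ m, Complex.normSq (c1 i m) * Complex.normSq (c2 j m) := by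
          exact Finset.sum_congr rfl fun j _ => nsq_mul _ _
      _ = ∑ m, Complex.normSq (c1 i m) * ∑ j ∈ J, Complex.normSq (c2 j m) := by
          rw [Finset.sum_comm]
          exact Finset.sum_congr rfl fun m _ => by rw [Finset.mul_sum]
      _ ≤ ∑ m, Complex.normSq (c1 i m) * 1 := by
          refine Finset.sum_le_sum fun m _ => ?_
          exact mul_le_mul_of_nonneg_left (bessel_coord c2 h2o h2n J m) (Complex.normSq_nonneg _)
      _ = nsq (c1 i) := by simp [nsq]
      _ ≤ 1 := h1n i
  calc ∑ i ∈ I, ∑ j ∈ J, nsq (fun m => c1 i m * c2 j m) ≤ ∑ i ∈ I, 1 :=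
        Finset.sum_le_sum fun i _ => step i
    _ = (I.card : ℝ) := by simp

/-- The triple sum of `‖⟨g t, c1 i ∘ c2 j⟩‖²` is at most each of the three cardinalities. -/
lemma triple_bound (g c1 c2 : Fin n → Fin n → ℂ)
    (hgo : ∀ i j, i ≠ j → dot (g i) (g j) = 0) (hgn : ∀ i, nsq (g i) ≤ 1)
    (h1o : ∀ i j, i ≠ j → dot (c1 i) (c1 j) = 0) (h1n : ∀ i, nsq (c1 i) ≤ 1)
    (h2o : ∀ i j, i ≠ j → dot (c2 i) (c2 j) = 0) (h2n : ∀ i, nsq (c2 i) ≤ 1)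
    (K I J : Finset (Fin n)) :
    ∑ t ∈ K, ∑ i ∈ I, ∑ j ∈ J, Complex.normSq (dot (g t) (fun m => c1 i m * c2 j m))
      ≤ min (min (K.card : ℝ) (I.card : ℝ)) (J.card : ℝ) := by
  have hrot : ∑ t ∈ K, ∑ i ∈ I, ∑ j ∈ J,
        Complex.normSq (dot (g t) (fun m => c1 i m * c2 j m))
      = ∑ i ∈ I, ∑ j ∈ J, ∑ t ∈ K,
        Complex.normSq (dot (g t) (fun m => c1 i m * c2 j m)) := by
    rw [sum3_rot, Finset.sum_comm]
  have hinner : ∀ i j, ∑ t ∈ K, Complex.normSq (dot (g t) (fun m => c1 i m * c2 j m))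
      ≤ nsq (fun m => c1 i m * c2 j m) := fun i j => bessel g hgo hgn K _
  refine le_min (le_min ?_ ?_) ?_
  · -- ≤ K.card
    have hK : ∀ t, ∑ i ∈ I, ∑ j ∈ J,
        Complex.normSq (dot (g t) (fun m => c1 i m * c2 j m)) ≤ 1 := by
      intro t
      have hrw : ∀ i j, Complex.normSq (dot (g t) (fun m => c1 i m * c2 j m))
          = Complex.normSq (dot (c2 j) (fun m => g t m * (starRingEnd ℂ) (c1 i m))) := by
        intro i j
        rw [normSq_dot_comm]
        congr 1
        simp only [dot, _root_.map_mul, Complex.conj_conj]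
        exact Finset.sum_congr rfl fun m _ => by ring
      calc ∑ i ∈ I, ∑ j ∈ J, Complex.normSq (dot (g t) (fun m => c1 i m * c2 j m))
          = ∑ i ∈ I, ∑ j ∈ J,
              Complex.normSq (dot (c2 j) (fun m => g t m * (starRingEnd ℂ) (c1 i m))) :=
            Finset.sum_congr rfl fun i _ => Finset.sum_congr rfl fun j _ => hrw i j
        _ ≤ ∑ i ∈ I, nsq (fun m => g t m * (starRingEnd ℂ) (c1 i m)) :=
            Finset.sum_le_sum fun i _ => bessel c2 h2o h2n J _
        _ = ∑ i ∈ I, ∑ m, Complex.normSq (g t m) * Complex.normSq (c1 i m) := by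
            refine Finset.sum_congr rfl fun i _ => ?_
            rw [nsq_mul]
            exact Finset.sum_congr rfl fun m _ => by rw [Complex.normSq_conj]
        _ = ∑ m, Complex.normSq (g t m) * ∑ i ∈ I, Complex.normSq (c1 i m) := by
            rw [Finset.sum_comm]
            exact Finset.sum_congr rfl fun m _ => by rw [Finset.mul_sum]
        _ ≤ ∑ m, Complex.normSq (g t m) * 1 :=
            Finset.sum_le_sum fun m _ =>
              mul_le_mul_of_nonneg_left (bessel_coord c1 h1o h1n I m) (Complex.normSq_nonneg _)
        _ = nsq (g t) := by simp [nsq]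
        _ ≤ 1 := hgn t
    calc ∑ t ∈ K, ∑ i ∈ I, ∑ j ∈ J,
          Complex.normSq (dot (g t) (fun m => c1 i m * c2 j m))
        ≤ ∑ t ∈ K, 1 := Finset.sum_le_sum fun t _ => hK t
      _ = (K.card : ℝ) := by simp
  · -- ≤ I.card
    rw [hrot]
    calc ∑ i ∈ I, ∑ j ∈ J, ∑ t ∈ K,
          Complex.normSq (dot (g t) (fun m => c1 i m * c2 j m))
        ≤ ∑ i ∈ I, ∑ j ∈ J, nsq (fun m => c1 i m * c2 j m) :=
          Finset.sum_le_sum fun i _ => Finset.sum_le_sum fun j _ => hinner i j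
      _ ≤ (I.card : ℝ) := prod_nsq_le c1 c2 h1n h2o h2n I J
  · -- ≤ J.card
    rw [hrot]
    calc ∑ i ∈ I, ∑ j ∈ J, ∑ t ∈ K,
          Complex.normSq (dot (g t) (fun m => c1 i m * c2 j m))
        ≤ ∑ i ∈ I, ∑ j ∈ J, nsq (fun m => c1 i m * c2 j m) :=
          Finset.sum_le_sum fun i _ => Finset.sum_le_sum fun j _ => hinner i j
      _ = ∑ j ∈ J, ∑ i ∈ I, nsq (fun m => c2 j m * c1 i m) := by
          rw [Finset.sum_comm]
          exact Finset.sum_congr rfl fun j _ => Finset.sum_congr rfl fun i _ => by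
            congr 1; funext m; ring
      _ ≤ (J.card : ℝ) := prod_nsq_le c2 c1 h2n h1o h1n J I

lemma expand_hadamard (A B : Matrix (Fin n) (Fin n) ℂ) (σ γ : Fin n → ℝ)
    (u v w x : Fin n → Fin n → ℂ)
    (hA : ∀ a b, A a b = ∑ i, (σ i : ℂ) * (u i a * (starRingEnd ℂ) (v i b)))
    (hB : ∀ a b, B a b = ∑ j, (γ j : ℂ) * (w j a * (starRingEnd ℂ) (x j b)))
    (e f : Fin n → ℂ) :
    dot e ((A.hadamard B).mulVec f)
      = ∑ i, ∑ j, ((σ i : ℂ) * (γ j : ℂ)) *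
          (dot e (fun m => u i m * w j m)
            * (starRingEnd ℂ) (dot f (fun m => v i m * x j m))) := by
  simp only [dot, mulVec, dotProduct, hadamard_apply, hA, hB, map_sum, _root_.map_mul,
    Finset.sum_mul, Finset.mul_sum, Complex.conj_conj, Complex.conj_ofReal]
  rw [sum4_swap, Finset.sum_comm]
  refine Finset.sum_congr rfl fun i _ => Finset.sum_congr rfl fun j _ => ?_
  rw [Finset.sum_comm]
  exact Finset.sum_congr rfl fun a _ => Finset.sum_congr rfl fun b _ => by ring

end KF

open KF in
theorem kyFan_singularValue_hadamard {n : ℕ} (A B : Matrix (Fin n) (Fin n) ℂ)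
    (k : ℕ) (hk1 : 1 ≤ k) (hkn : k ≤ n) :
    ∑ i ∈ Finset.univ.filter (fun i : Fin n => (i : ℕ) < k),
        singularValue (Matrix.hadamard A B) i ≤
      ∑ i ∈ Finset.univ.filter (fun i : Fin n => (i : ℕ) < k),
        singularValue A i * singularValue B i := by
  classical
  obtain ⟨u, v, hAuo, hAud, hAvo, hAdec, hAmv⟩ := exists_svd A
  obtain ⟨w, x, hBuo, hBud, hBvo, hBdec, hBmv⟩ := exists_svd B
  obtain ⟨e, f, hMuo, hMud, hMvo, hMdec, hMmv⟩ := exists_svd (A.hadamard B)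
  -- norms at most one
  have hen : ∀ t, nsq (e t) ≤ 1 := fun t => by
    rw [← dot_self_re, hMud t]
    by_cases h0 : singularValue (A.hadamard B) t = 0 <;> simp [h0]
  have hfn : ∀ t, nsq (f t) ≤ 1 := fun t => by
    rw [← dot_self_re, hMvo t t, if_pos rfl]; norm_num
  have hun : ∀ t, nsq (u t) ≤ 1 := fun t => by
    rw [← dot_self_re, hAud t]
    by_cases h0 : singularValue A t = 0 <;> simp [h0]
  have hvn : ∀ t, nsq (v t) ≤ 1 := fun t => by
    rw [← dot_self_re, hAvo t t, if_pos rfl]; norm_num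
  have hwn : ∀ t, nsq (w t) ≤ 1 := fun t => by
    rw [← dot_self_re, hBud t]
    by_cases h0 : singularValue B t = 0 <;> simp [h0]
  have hxn : ∀ t, nsq (x t) ≤ 1 := fun t => by
    rw [← dot_self_re, hBvo t t, if_pos rfl]; norm_num
  have hfo : ∀ i j, i ≠ j → dot (f i) (f j) = 0 := fun i j hij => by
    rw [hMvo i j, if_neg hij]
  have hvo : ∀ i j, i ≠ j → dot (v i) (v j) = 0 := fun i j hij => by
    rw [hAvo i j, if_neg hij]
  have hxo : ∀ i j, i ≠ j → dot (x i) (x j) = 0 := fun i j hij => by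
    rw [hBvo i j, if_neg hij]
  obtain ⟨α, hα0, hαsum⟩ := abel_exists (fun i => singularValue A i)
    (fun i j hij => singularValue_antitone A hij) (fun i => singularValue_nonneg A i)
  obtain ⟨β, hβ0, hβsum⟩ := abel_exists (fun i => singularValue B i)
    (fun i j hij => singularValue_antitone B hij) (fun i => singularValue_nonneg B i)
  set K := Finset.univ.filter (fun t : Fin n => (t : ℕ) < k) with hK
  -- Step 1: expansion of each singular value of the Hadamard product
  have hsv : ∀ t, singularValue (A.hadamard B) t
      = ∑ i, ∑ j, (singularValue A i * singularValue B j) *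
          ((dot (e t) (fun m => u i m * w j m)
            * (starRingEnd ℂ) (dot (f t) (fun m => v i m * x j m))).re) := by
    intro t
    have h2 : (A.hadamard B).mulVec (f t)
        = fun a => (singularValue (A.hadamard B) t : ℂ) * e t a := funext fun a => hMmv t a
    have h1 : dot (e t) ((A.hadamard B).mulVec (f t))
        = (singularValue (A.hadamard B) t : ℂ) * dot (e t) (e t) := by
      rw [h2]
      simp only [dot, Finset.mul_sum]
      exact Finset.sum_congr rfl fun m _ => by ring
    have h3 : singularValue (A.hadamard B) t
        = (dot (e t) ((A.hadamard B).mulVec (f t))).re := by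
      rw [h1, hMud t]
      by_cases h0 : singularValue (A.hadamard B) t = 0
      · simp [h0]
      · rw [if_neg h0]; simp
    rw [h3, expand_hadamard A B _ _ u v w x hAdec hBdec (e t) (f t), Complex.re_sum]
    refine Finset.sum_congr rfl fun i _ => ?_
    rw [Complex.re_sum]
    refine Finset.sum_congr rfl fun j _ => ?_
    rw [← Complex.ofReal_mul, Complex.re_ofReal_mul]
  -- Step 2: Abel summation in both factors
  have hsrep : ∀ i, singularValue A i = ∑ p, if i ≤ p then α p else 0 := fun i =>
    (hαsum i).symm.trans (Finset.sum_filter _ _)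
  have hgrep : ∀ j, singularValue B j = ∑ q, if j ≤ q then β q else 0 := fun j =>
    (hβsum j).symm.trans (Finset.sum_filter _ _)
  have habel : ∀ t, (∑ i, ∑ j, (singularValue A i * singularValue B j) *
          ((dot (e t) (fun m => u i m * w j m)
            * (starRingEnd ℂ) (dot (f t) (fun m => v i m * x j m))).re))
      = ∑ p, ∑ q, α p * β q *
          (∑ i ∈ Finset.univ.filter (fun i : Fin n => i ≤ p),
            ∑ j ∈ Finset.univ.filter (fun j : Fin n => j ≤ q),
            ((dot (e t) (fun m => u i m * w j m)
              * (starRingEnd ℂ) (dot (f t) (fun m => v i m * x j m))).re)) := by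
    intro t
    calc ∑ i, ∑ j, (singularValue A i * singularValue B j) *
          ((dot (e t) (fun m => u i m * w j m)
            * (starRingEnd ℂ) (dot (f t) (fun m => v i m * x j m))).re)
        = ∑ i, ∑ j, ∑ p, ∑ q, (if i ≤ p then α p else 0) * (if j ≤ q then β q else 0) *
              ((dot (e t) (fun m => u i m * w j m)
                * (starRingEnd ℂ) (dot (f t) (fun m => v i m * x j m))).re) := by
          refine Finset.sum_congr rfl fun i _ => Finset.sum_congr rfl fun j _ => ?_
          rw [hsrep i, hgrep j, Finset.sum_mul_sum, Finset.sum_mul]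
          exact Finset.sum_congr rfl fun p _ => by rw [Finset.sum_mul]
      _ = ∑ p, ∑ q, ∑ i, ∑ j, (if i ≤ p then α p else 0) * (if j ≤ q then β q else 0) *
              ((dot (e t) (fun m => u i m * w j m)
                * (starRingEnd ℂ) (dot (f t) (fun m => v i m * x j m))).re) :=
          sum4_swap _ _ _ _ _
      _ = ∑ p, ∑ q, α p * β q *
          (∑ i ∈ Finset.univ.filter (fun i : Fin n => i ≤ p),
            ∑ j ∈ Finset.univ.filter (fun j : Fin n => j ≤ q),
            ((dot (e t) (fun m => u i m * w j m)
              * (starRingEnd ℂ) (dot (f t) (fun m => v i m * x j m))).re)) := by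
          refine Finset.sum_congr rfl fun p _ => Finset.sum_congr rfl fun q _ => ?_
          calc ∑ i, ∑ j, (if i ≤ p then α p else 0) * (if j ≤ q then β q else 0) *
                ((dot (e t) (fun m => u i m * w j m)
                  * (starRingEnd ℂ) (dot (f t) (fun m => v i m * x j m))).re)
              = ∑ i, (if i ≤ p then (∑ j, (if j ≤ q then α p * β q *
                  ((dot (e t) (fun m => u i m * w j m)
                    * (starRingEnd ℂ) (dot (f t) (fun m => v i m * x j m))).re) else 0)) else 0) := by
                refine Finset.sum_congr rfl fun i _ => ?_
                by_cases h1 : i ≤ p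
                · simp only [if_pos h1]
                  refine Finset.sum_congr rfl fun j _ => ?_
                  by_cases h2 : j ≤ q
                  · simp only [if_pos h2]; try ring
                  · simp only [if_neg h2]; try ring
                · simp only [if_neg h1]
                  exact Finset.sum_eq_zero fun j _ => by ring
            _ = ∑ i ∈ Finset.univ.filter (fun i : Fin n => i ≤ p),
                  ∑ j, (if j ≤ q then α p * β q *
                  ((dot (e t) (fun m => u i m * w j m)
                    * (starRingEnd ℂ) (dot (f t) (fun m => v i m * x j m))).re) else 0) :=
                (Finset.sum_filter _ _).symm
            _ = ∑ i ∈ Finset.univ.filter (fun i : Fin n => i ≤ p),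
                  ∑ j ∈ Finset.univ.filter (fun j : Fin n => j ≤ q), α p * β q *
                  ((dot (e t) (fun m => u i m * w j m)
                    * (starRingEnd ℂ) (dot (f t) (fun m => v i m * x j m))).re) :=
                Finset.sum_congr rfl fun i _ => (Finset.sum_filter _ _).symm
            _ = α p * β q *
                (∑ i ∈ Finset.univ.filter (fun i : Fin n => i ≤ p),
                  ∑ j ∈ Finset.univ.filter (fun j : Fin n => j ≤ q),
                  ((dot (e t) (fun m => u i m * w j m)
                    * (starRingEnd ℂ) (dot (f t) (fun m => v i m * x j m))).re)) := by
                rw [Finset.mul_sum]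
                exact Finset.sum_congr rfl fun i _ => by rw [Finset.mul_sum]
  -- Step 3: swap the `t` sum inside
  have hsum1 : ∑ t ∈ K, singularValue (A.hadamard B) t
      = ∑ p, ∑ q, α p * β q *
          (∑ t ∈ K, ∑ i ∈ Finset.univ.filter (fun i : Fin n => i ≤ p),
            ∑ j ∈ Finset.univ.filter (fun j : Fin n => j ≤ q),
            ((dot (e t) (fun m => u i m * w j m)
              * (starRingEnd ℂ) (dot (f t) (fun m => v i m * x j m))).re)) := by
    calc ∑ t ∈ K, singularValue (A.hadamard B) t
        = ∑ t ∈ K, ∑ p, ∑ q, α p * β q *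
            (∑ i ∈ Finset.univ.filter (fun i : Fin n => i ≤ p),
              ∑ j ∈ Finset.univ.filter (fun j : Fin n => j ≤ q),
              ((dot (e t) (fun m => u i m * w j m)
                * (starRingEnd ℂ) (dot (f t) (fun m => v i m * x j m))).re)) :=
          Finset.sum_congr rfl fun t _ => (hsv t).trans (habel t)
      _ = ∑ p, ∑ q, ∑ t ∈ K, α p * β q *
            (∑ i ∈ Finset.univ.filter (fun i : Fin n => i ≤ p),
              ∑ j ∈ Finset.univ.filter (fun j : Fin n => j ≤ q),
              ((dot (e t) (fun m => u i m * w j m)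
                * (starRingEnd ℂ) (dot (f t) (fun m => v i m * x j m))).re)) := by
          rw [sum3_rot, Finset.sum_comm]
      _ = _ := by
          refine Finset.sum_congr rfl fun p _ => Finset.sum_congr rfl fun q _ => ?_
          rw [Finset.mul_sum]
  -- cardinality facts
  have hIcard : ∀ p : Fin n, ((Finset.univ.filter (fun i : Fin n => i ≤ p)).card) = (p : ℕ) + 1 := by
    intro p
    have hfe : Finset.univ.filter (fun i : Fin n => i ≤ p)
        = Finset.univ.filter (fun i : Fin n => (i : ℕ) < (p : ℕ) + 1) := by
      apply Finset.filter_congr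
      intro i _
      rw [Fin.le_def]
      omega
    rw [hfe, card_filter_lt _ (by have := p.isLt; omega)]
  have hKcard : K.card = k := by rw [hK, card_filter_lt k hkn]
  have hNr : ∀ p q : Fin n, ((K.filter (fun t : Fin n => t ≤ p ∧ t ≤ q)).card)
      = min k (min ((p : ℕ) + 1) ((q : ℕ) + 1)) := by
    intro p q
    rw [hK, Finset.filter_filter]
    have hfe : Finset.univ.filter (fun t : Fin n => (t : ℕ) < k ∧ (t ≤ p ∧ t ≤ q))
        = Finset.univ.filter
            (fun t : Fin n => (t : ℕ) < min k (min ((p : ℕ) + 1) ((q : ℕ) + 1))) := by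
      apply Finset.filter_congr
      intro t _
      simp only [Fin.le_def]
      omega
    rw [hfe, card_filter_lt _ (by have := p.isLt; omega)]
  -- Step 4: the key bound on the inner triple sum
  have hTle : ∀ p q : Fin n,
      (∑ t ∈ K, ∑ i ∈ Finset.univ.filter (fun i : Fin n => i ≤ p),
        ∑ j ∈ Finset.univ.filter (fun j : Fin n => j ≤ q),
        ((dot (e t) (fun m => u i m * w j m)
          * (starRingEnd ℂ) (dot (f t) (fun m => v i m * x j m))).re))
      ≤ ((K.filter (fun t : Fin n => t ≤ p ∧ t ≤ q)).card : ℝ) := by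
    intro p q
    set Ip := Finset.univ.filter (fun i : Fin n => i ≤ p) with hIp
    set Jq := Finset.univ.filter (fun j : Fin n => j ≤ q) with hJq
    set S := K ×ˢ (Ip ×ˢ Jq) with hS
    have hprod : ∀ (F : Fin n → Fin n → Fin n → ℝ),
        ∑ z ∈ S, F z.1 z.2.1 z.2.2 = ∑ t ∈ K, ∑ i ∈ Ip, ∑ j ∈ Jq, F t i j := by
      intro F
      rw [hS, Finset.sum_product]
      exact Finset.sum_congr rfl fun t _ => by rw [Finset.sum_product]
    set mR : ℝ := min (min (K.card : ℝ) (Ip.card : ℝ)) (Jq.card : ℝ) with hmR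
    have hmR0 : 0 ≤ mR := by
      rw [hmR]
      exact le_min (le_min (Nat.cast_nonneg _) (Nat.cast_nonneg _)) (Nat.cast_nonneg _)
    have hSa : ∑ z ∈ S, Complex.normSq (dot (e z.1) (fun m => u z.2.1 m * w z.2.2 m)) ≤ mR := by
      rw [hprod (fun t i j => Complex.normSq (dot (e t) (fun m => u i m * w j m)))]
      exact triple_bound e u w hMuo hen hAuo hun hBuo hwn K Ip Jq
    have hSb : ∑ z ∈ S, Complex.normSq (dot (f z.1) (fun m => v z.2.1 m * x z.2.2 m)) ≤ mR := by
      rw [hprod (fun t i j => Complex.normSq (dot (f t) (fun m => v i m * x j m)))]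
      exact triple_bound f v x hfo hfn hvo hvn hxo hxn K Ip Jq
    calc ∑ t ∈ K, ∑ i ∈ Ip, ∑ j ∈ Jq,
          ((dot (e t) (fun m => u i m * w j m)
            * (starRingEnd ℂ) (dot (f t) (fun m => v i m * x j m))).re)
        = ∑ z ∈ S, ((dot (e z.1) (fun m => u z.2.1 m * w z.2.2 m)
            * (starRingEnd ℂ) (dot (f z.1) (fun m => v z.2.1 m * x z.2.2 m))).re) :=
          (hprod (fun t i j => ((dot (e t) (fun m => u i m * w j m)
            * (starRingEnd ℂ) (dot (f t) (fun m => v i m * x j m))).re))).symm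
      _ ≤ ∑ z ∈ S, ‖dot (e z.1) (fun m => u z.2.1 m * w z.2.2 m)‖
            * ‖dot (f z.1) (fun m => v z.2.1 m * x z.2.2 m)‖ := by
          refine Finset.sum_le_sum fun z _ => ?_
          calc ((dot (e z.1) (fun m => u z.2.1 m * w z.2.2 m)
              * (starRingEnd ℂ) (dot (f z.1) (fun m => v z.2.1 m * x z.2.2 m))).re)
              ≤ ‖dot (e z.1) (fun m => u z.2.1 m * w z.2.2 m)
                  * (starRingEnd ℂ) (dot (f z.1) (fun m => v z.2.1 m * x z.2.2 m))‖ :=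
                Complex.re_le_norm _
            _ = _ := by rw [norm_mul, Complex.norm_conj]
      _ ≤ Real.sqrt (∑ z ∈ S,
              ‖dot (e z.1) (fun m => u z.2.1 m * w z.2.2 m)‖ ^ 2)
            * Real.sqrt (∑ z ∈ S,
              ‖dot (f z.1) (fun m => v z.2.1 m * x z.2.2 m)‖ ^ 2) :=
          Real.sum_mul_le_sqrt_mul_sqrt _ _ _
      _ ≤ Real.sqrt mR * Real.sqrt mR := by
          refine mul_le_mul ?_ ?_ (Real.sqrt_nonneg _) (Real.sqrt_nonneg _)
          · apply Real.sqrt_le_sqrt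
            calc ∑ z ∈ S, ‖dot (e z.1) (fun m => u z.2.1 m * w z.2.2 m)‖ ^ 2
                = ∑ z ∈ S, Complex.normSq (dot (e z.1) (fun m => u z.2.1 m * w z.2.2 m)) :=
                  Finset.sum_congr rfl fun z _ => Complex.sq_norm _
              _ ≤ mR := hSa
          · apply Real.sqrt_le_sqrt
            calc ∑ z ∈ S, ‖dot (f z.1) (fun m => v z.2.1 m * x z.2.2 m)‖ ^ 2
                = ∑ z ∈ S, Complex.normSq (dot (f z.1) (fun m => v z.2.1 m * x z.2.2 m)) :=
                  Finset.sum_congr rfl fun z _ => Complex.sq_norm _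
              _ ≤ mR := hSb
      _ = mR := Real.mul_self_sqrt hmR0
      _ ≤ ((K.filter (fun t : Fin n => t ≤ p ∧ t ≤ q)).card : ℝ) := by
          rw [hNr p q, hmR, hKcard, hIcard p, hIcard q]
          push_cast [Nat.cast_min]
          rw [min_assoc]
  -- Step 5: resum the right-hand side
  have hfinal : ∑ p, ∑ q, α p * β q * ((K.filter (fun t : Fin n => t ≤ p ∧ t ≤ q)).card : ℝ)
      = ∑ t ∈ K, singularValue A t * singularValue B t := by
    have hcard_sum : ∀ p q : Fin n, ((K.filter (fun t : Fin n => t ≤ p ∧ t ≤ q)).card : ℝ)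
        = ∑ t ∈ K, (if t ≤ p then (1:ℝ) else 0) * (if t ≤ q then (1:ℝ) else 0) := by
      intro p q
      rw [Finset.card_filter]
      push_cast
      exact Finset.sum_congr rfl fun t _ => by
        by_cases h1 : t ≤ p <;> by_cases h2 : t ≤ q <;> simp [h1, h2]
    calc ∑ p, ∑ q, α p * β q * ((K.filter (fun t : Fin n => t ≤ p ∧ t ≤ q)).card : ℝ)
        = ∑ p, ∑ q, ∑ t ∈ K, (if t ≤ p then α p else 0) * (if t ≤ q then β q else 0) := by
          refine Finset.sum_congr rfl fun p _ => Finset.sum_congr rfl fun q _ => ?_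
          rw [hcard_sum p q, Finset.mul_sum]
          exact Finset.sum_congr rfl fun t _ => by
            by_cases h1 : t ≤ p <;> by_cases h2 : t ≤ q <;> simp [h1, h2]
      _ = ∑ t ∈ K, ∑ p, ∑ q, (if t ≤ p then α p else 0) * (if t ≤ q then β q else 0) := by
          rw [sum3_rot]
          exact Finset.sum_congr rfl fun t _ => Finset.sum_comm
      _ = ∑ t ∈ K, (∑ p, if t ≤ p then α p else 0) * (∑ q, if t ≤ q then β q else 0) :=
          Finset.sum_congr rfl fun t _ => (Finset.sum_mul_sum _ _ _ _).symm
      _ = ∑ t ∈ K, singularValue A t * singularValue B t := by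
          refine Finset.sum_congr rfl fun t _ => ?_
          rw [← Finset.sum_filter, ← Finset.sum_filter, hαsum t, hβsum t]
  -- conclusion
  calc ∑ t ∈ K, singularValue (A.hadamard B) t
      = ∑ p, ∑ q, α p * β q *
          (∑ t ∈ K, ∑ i ∈ Finset.univ.filter (fun i : Fin n => i ≤ p),
            ∑ j ∈ Finset.univ.filter (fun j : Fin n => j ≤ q),
            ((dot (e t) (fun m => u i m * w j m)
              * (starRingEnd ℂ) (dot (f t) (fun m => v i m * x j m))).re)) := hsum1
    _ ≤ ∑ p, ∑ q, α p * β q * ((K.filter (fun t : Fin n => t ≤ p ∧ t ≤ q)).card : ℝ) := by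
        refine Finset.sum_le_sum fun p _ => Finset.sum_le_sum fun q _ => ?_
        exact mul_le_mul_of_nonneg_left (hTle p q) (mul_nonneg (hα0 p) (hβ0 q))
    _ = ∑ t ∈ K, singularValue A t * singularValue B t := hfinal
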